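/- Converse direction used in Proposition 3: with U = F/⟨R⟩ and φ̃ : F → C satisfying φ̃(1)=1, φ̃(xy)=(ξ̃_{x₍₁₎}·φ̃(y))·φ̃(x₍₂₎), and (π⊗φ̃)∘Δ̃(R)=0, the associated F-module action x·f := (ξ̃_{x₍₁₎}·f)·φ̃(x₍₂₎) satisfies x·f = 0 for all x ∈ ⟨R⟩ and f ∈ C; consequently the action factors through U and the induced U-action on C satisfies the generalized Leibniz rule u·(fg) = (ξ_{u₍₁₎}·f)(u₍₂₎·g). -/

import Mathlib

open TensorProduct


/-- The "Sweedler" map `x ↦ A(x₍₁₎) * B(x₍₂₎)`. -/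
noncomputable def sw {R U C : Type*} [CommRing R] [Ring U] [Bialgebra R U]
    [Ring C] [Algebra R C] (A B : U →ₗ[R] C) : U →ₗ[R] C :=
  LinearMap.mul' R C ∘ₗ TensorProduct.map A B ∘ₗ Coalgebra.comul

/-- `actOn ξ f : x ↦ ξ_x · f`. -/
noncomputable def actOn {R U C : Type*} [CommRing R] [Ring U] [Algebra R U]
    [Ring C] [Algebra R C] (ξ : U →ₗ[R] Module.End R C) (f : C) : U →ₗ[R] C :=
  LinearMap.applyₗ f ∘ₗ ξ


/-- `x ↦ A(x₍₁₎) * B(x₍₂₎)` with respect to an explicitly given comultiplication `Δ`. -/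
noncomputable def swF {F C : Type*} [Ring F] [Algebra ℂ F] [Ring C] [Algebra ℂ C]
    (Δ : F →ₗ[ℂ] F ⊗[ℂ] F) (A B : F →ₗ[ℂ] C) : F →ₗ[ℂ] C :=
  LinearMap.mul' ℂ C ∘ₗ TensorProduct.map A B ∘ₗ Δ

/-- `actOnF ξ f : x ↦ ξ_x · f`. -/
noncomputable def actOnF {F C : Type*} [Ring F] [Algebra ℂ F] [Ring C] [Algebra ℂ C]
    (ξ : F →ₗ[ℂ] Module.End ℂ C) (f : C) : F →ₗ[ℂ] C :=
  LinearMap.applyₗ f ∘ₗ ξ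

set_option maxHeartbeats 1000000
set_option synthInstance.maxHeartbeats 400000

/-- The modified `F`-action `x·f := (ξ̃_{x₍₁₎}·f)·φ̃(x₍₂₎)` kills the ideal `⟨R⟩`,
hence factors through `U = F/⟨R⟩`, and the induced `U`-action satisfies the
generalized Leibniz rule. -/
theorem prop3_action_factorization {M U C : Type*} [Ring U] [Bialgebra ℂ U]
    [Ring C] [Algebra ℂ C]
    (Δ : FreeAlgebra ℂ M →ₐ[ℂ] FreeAlgebra ℂ M ⊗[ℂ] FreeAlgebra ℂ M)
    (ε : FreeAlgebra ℂ M →ₐ[ℂ] ℂ)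
    (S : Set (FreeAlgebra ℂ M))
    (π : FreeAlgebra ℂ M →ₐ[ℂ] U)
    (hπsurj : Function.Surjective π)
    (hker : ∀ x : FreeAlgebra ℂ M, π x = 0 ↔
      x ∈ Submodule.span ℂ {x : FreeAlgebra ℂ M |
        ∃ a : FreeAlgebra ℂ M, ∃ r ∈ S, ∃ b : FreeAlgebra ℂ M, x = a * r * b})
    (hπcomul : ∀ x : FreeAlgebra ℂ M,
      Coalgebra.comul (R := ℂ) (π x) =
        (TensorProduct.map π.toLinearMap π.toLinearMap) (Δ x))
    (hπcounit : ∀ x : FreeAlgebra ℂ M,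
      Coalgebra.counit (R := ℂ) (π x) = ε x)
    (ξ : U →ₗ[ℂ] Module.End ℂ C)
    (hξone : ξ 1 = LinearMap.id)
    (hξmul : ∀ x y : U, ξ (x * y) = ξ x ∘ₗ ξ y)
    (hξunit : ∀ x : U, ξ x 1 = Coalgebra.counit (R := ℂ) x • (1 : C))
    (hξleib : ∀ (x : U) (f g : C), ξ x (f * g) = sw (actOn ξ f) (actOn ξ g) x)
    (φt : FreeAlgebra ℂ M →ₗ[ℂ] C)
    (hφtone : φt 1 = 1)
    (hφtmul : ∀ x y : FreeAlgebra ℂ M,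
      φt (x * y) =
        swF Δ.toLinearMap (actOnF (ξ ∘ₗ π.toLinearMap) (φt y)) φt x)
    (hvanish : ∀ r ∈ S, (TensorProduct.map π.toLinearMap φt) (Δ r) = 0) :
    (∀ x ∈ Submodule.span ℂ {x : FreeAlgebra ℂ M |
        ∃ a : FreeAlgebra ℂ M, ∃ r ∈ S, ∃ b : FreeAlgebra ℂ M, x = a * r * b},
      ∀ f : C, swF Δ.toLinearMap (actOnF (ξ ∘ₗ π.toLinearMap) f) φt x = 0) ∧
    (∃ act : U →ₗ[ℂ] Module.End ℂ C,
      (∀ (x : FreeAlgebra ℂ M) (f : C),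
        act (π x) f = swF Δ.toLinearMap (actOnF (ξ ∘ₗ π.toLinearMap) f) φt x) ∧
      (∀ (u : U) (f g : C),
        act u (f * g) = sw (actOn ξ f) (actOn act g) u)) := by
  classical
  set p : FreeAlgebra ℂ M →ₗ[ℂ] U := π.toLinearMap with hp
  -- the swF expression factors through `(π ⊗ φt) ∘ Δ`
  have key0 : ∀ (c : C) (x : FreeAlgebra ℂ M),
      swF Δ.toLinearMap (actOnF (ξ ∘ₗ p) c) φt x =
        LinearMap.mul' ℂ C
          ((TensorProduct.map (LinearMap.applyₗ c ∘ₗ ξ) LinearMap.id)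
            ((TensorProduct.map p φt) (Δ x))) := by
    intro c x
    have : TensorProduct.map (actOnF (ξ ∘ₗ p) c) φt =
        (TensorProduct.map (LinearMap.applyₗ c ∘ₗ ξ) LinearMap.id) ∘ₗ
          (TensorProduct.map p φt) := by
      rw [← TensorProduct.map_comp]
      rfl
    simp [swF, this]
  -- swF vanishes wherever `(π ⊗ φt)(Δ x) = 0`
  have key1 : ∀ (c : C) (x : FreeAlgebra ℂ M), (TensorProduct.map p φt) (Δ x) = 0 →
      swF Δ.toLinearMap (actOnF (ξ ∘ₗ p) c) φt x = 0 := by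
    intro c x h
    rw [key0, h]
    simp
  -- swF with c = 0 vanishes
  have key2 : ∀ x : FreeAlgebra ℂ M, swF Δ.toLinearMap (actOnF (ξ ∘ₗ p) (0 : C)) φt x = 0 := by
    intro x
    rw [key0]
    have : (LinearMap.applyₗ (0 : C) ∘ₗ ξ : U →ₗ[ℂ] C) = 0 := by
      ext u; simp
    rw [this]
    simp
  -- φt vanishes on ker π
  have hφtker : ∀ x : FreeAlgebra ℂ M, π x = 0 → φt x = 0 := by
    intro x hx
    have hx' := (hker x).mp hx
    have hle : Submodule.span ℂ {x : FreeAlgebra ℂ M |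
        ∃ a : FreeAlgebra ℂ M, ∃ r ∈ S, ∃ b : FreeAlgebra ℂ M, x = a * r * b} ≤ LinearMap.ker φt := by
      rw [Submodule.span_le]
      rintro _ ⟨a, r, hr, b, rfl⟩
      have hrb : φt (r * b) = 0 := by
        rw [hφtmul r b]
        exact key1 _ r (hvanish r hr)
      have : φt (a * r * b) = 0 := by
        rw [mul_assoc, hφtmul a (r * b), hrb]
        exact key2 a
      simpa [LinearMap.mem_ker] using this
    simpa [LinearMap.mem_ker] using hle hx'
  -- factor φt through π
  let σ : U → FreeAlgebra ℂ M := Function.surjInv hπsurj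
  have hσ : ∀ u : U, π (σ u) = u := fun u => Function.surjInv_eq hπsurj u
  let ψ : U →ₗ[ℂ] C :=
    { toFun := fun u => φt (σ u)
      map_add' := by
        intro u v
        have h0 : π (σ (u + v) - σ u - σ v) = 0 := by
          simp [map_sub, hσ]
        have := hφtker _ h0
        simp only [map_sub] at this
        rw [sub_sub, sub_eq_zero] at this
        simpa using this
      map_smul' := by
        intro c u
        have h0 : π (σ (c • u) - c • σ u) = 0 := by
          simp [map_sub, map_smul, hσ]
        have := hφtker _ h0
        simp only [map_sub, map_smul] at this
        simpa [sub_eq_zero] using this }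
  have hψ : ∀ x : FreeAlgebra ℂ M, ψ (π x) = φt x := by
    intro x
    have h0 : π (σ (π x) - x) = 0 := by simp [map_sub, hσ]
    have := hφtker _ h0
    simp only [map_sub] at this
    have := sub_eq_zero.mp this
    simpa [ψ] using this
  -- the main normal form
  have key3 : ∀ (c : C) (x : FreeAlgebra ℂ M),
      swF Δ.toLinearMap (actOnF (ξ ∘ₗ p) c) φt x =
        LinearMap.mul' ℂ C
          ((TensorProduct.map (LinearMap.applyₗ c ∘ₗ ξ) ψ)
            (Coalgebra.comul (R := ℂ) (π x))) := by
    intro c x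
    rw [key0, hπcomul]
    have : ∀ z : FreeAlgebra ℂ M ⊗[ℂ] FreeAlgebra ℂ M,
        LinearMap.mul' ℂ C ((TensorProduct.map (LinearMap.applyₗ c ∘ₗ ξ) LinearMap.id)
            ((TensorProduct.map p φt) z)) =
        LinearMap.mul' ℂ C ((TensorProduct.map (LinearMap.applyₗ c ∘ₗ ξ) ψ)
            ((TensorProduct.map p p) z)) := by
      intro z
      induction z using TensorProduct.induction_on with
      | zero => simp
      | tmul a b =>
        have hpb : ψ (p b) = φt b := hψ b
        simp [hpb]
      | add w₁ w₂ h1 h2 => simp [map_add, h1, h2]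
    exact this (Δ x)
  -- part 1
  have part1 : ∀ x ∈ Submodule.span ℂ {x : FreeAlgebra ℂ M |
      ∃ a : FreeAlgebra ℂ M, ∃ r ∈ S, ∃ b : FreeAlgebra ℂ M, x = a * r * b},
      ∀ f : C, swF Δ.toLinearMap (actOnF (ξ ∘ₗ p) f) φt x = 0 := by
    intro x hx f
    have hx0 : π x = 0 := (hker x).mpr hx
    rw [key3, hx0]
    simp
  refine ⟨part1, ?_⟩
  -- the induced action
  let act : U →ₗ[ℂ] Module.End ℂ C :=
    { toFun := fun u =>
        { toFun := fun f => LinearMap.mul' ℂ C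
            ((TensorProduct.map (LinearMap.applyₗ f ∘ₗ ξ) ψ)
              (Coalgebra.comul (R := ℂ) u))
          map_add' := by
            intro f g
            have h1 : (LinearMap.applyₗ (f + g) ∘ₗ ξ : U →ₗ[ℂ] C) =
                LinearMap.applyₗ f ∘ₗ ξ + LinearMap.applyₗ g ∘ₗ ξ := by
              rw [map_add, LinearMap.add_comp]
            rw [h1, TensorProduct.map_add_left]
            simp
          map_smul' := by
            intro c f
            have h1 : (LinearMap.applyₗ (c • f) ∘ₗ ξ : U →ₗ[ℂ] C) =
                c • (LinearMap.applyₗ f ∘ₗ ξ) := by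
              rw [map_smul, LinearMap.smul_comp]
            rw [h1, TensorProduct.map_smul_left]
            simp }
      map_add' := by
        intro u v
        ext f
        simp
      map_smul' := by
        intro c u
        ext f
        simp }
  have hact : ∀ (u : U) (f : C),
      act u f = LinearMap.mul' ℂ C
        ((TensorProduct.map (LinearMap.applyₗ f ∘ₗ ξ) ψ)
          (Coalgebra.comul (R := ℂ) u)) := fun _ _ => rfl
  refine ⟨act, ?_, ?_⟩
  · intro x f
    rw [hact]
    exact (key3 f x).symm
  · -- Leibniz rule
    intro u f g
    set Af : U →ₗ[ℂ] C := actOn ξ f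
    set Ag : U →ₗ[ℂ] C := actOn ξ g
    -- trilinear evaluators
    set T3 : (U ⊗[ℂ] U) ⊗[ℂ] U →ₗ[ℂ] C :=
      LinearMap.mul' ℂ C ∘ₗ
        TensorProduct.map (LinearMap.mul' ℂ C ∘ₗ TensorProduct.map Af Ag) ψ with hT3
    set T3' : U ⊗[ℂ] (U ⊗[ℂ] U) →ₗ[ℂ] C :=
      LinearMap.mul' ℂ C ∘ₗ
        TensorProduct.map Af (LinearMap.mul' ℂ C ∘ₗ TensorProduct.map Ag ψ) with hT3'
    have lhs_eq : act u (f * g) =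
        T3 ((Coalgebra.comul (R := ℂ)).rTensor U (Coalgebra.comul u)) := by
      rw [hact]
      have hfg : (LinearMap.applyₗ (f * g) ∘ₗ ξ : U →ₗ[ℂ] C) = sw Af Ag := by
        ext v; simpa using hξleib v f g
      rw [hfg]
      have : ∀ t : U ⊗[ℂ] U,
          LinearMap.mul' ℂ C ((TensorProduct.map (sw Af Ag) ψ) t) =
          T3 ((Coalgebra.comul (R := ℂ)).rTensor U t) := by
        intro t
        induction t using TensorProduct.induction_on with
        | zero => simp
        | tmul a b => simp [sw, T3, LinearMap.rTensor_tmul]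
        | add w₁ w₂ h1 h2 => simp only [map_add, h1, h2]
      exact this (Coalgebra.comul u)
    have rhs_eq : sw Af (actOn act g) u =
        T3' ((Coalgebra.comul (R := ℂ)).lTensor U (Coalgebra.comul u)) := by
      have : ∀ t : U ⊗[ℂ] U,
          LinearMap.mul' ℂ C ((TensorProduct.map Af (actOn act g)) t) =
          T3' ((Coalgebra.comul (R := ℂ)).lTensor U t) := by
        intro t
        induction t using TensorProduct.induction_on with
        | zero => simp
        | tmul a b =>
          simp only [TensorProduct.map_tmul, LinearMap.lTensor_tmul, T3',
            LinearMap.coe_comp, Function.comp_apply, LinearMap.mul'_apply]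
          rw [show (actOn act g) b = act b g from rfl, hact]
          rfl
        | add w₁ w₂ h1 h2 => simp only [map_add, h1, h2]
      simpa [sw] using this (Coalgebra.comul u)
    have assoc_eq : ∀ w : (U ⊗[ℂ] U) ⊗[ℂ] U,
        T3' (TensorProduct.assoc ℂ U U U w) = T3 w := by
      intro w
      induction w using TensorProduct.induction_on with
      | zero => simp
      | tmul x c =>
        induction x using TensorProduct.induction_on with
        | zero => simp
        | tmul a b => simp [T3, T3', mul_assoc]
        | add y₁ y₂ h1 h2 =>
          simp only [TensorProduct.add_tmul, map_add, h1, h2]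
      | add w₁ w₂ h1 h2 => simp only [map_add, h1, h2]
    rw [lhs_eq, rhs_eq, ← Coalgebra.coassoc_apply, assoc_eq]
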